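/- Let u₀ : ℝ → ℝ be a continuous, 1-periodic, continuously differentiable function with u₀(x₀) = 0 at some point x₀ and u₀ not identically zero. Then there exists a point a ∈ ℝ such that u₀'(a) < -√(3/2)·|u₀(a)|. -/

import Mathlib

private lemma key_aux (c : ℝ) (u : ℝ → ℝ) (hC1 : ContDiff ℝ 1 u)
    (h : ∀ a, -c * |u a| ≤ deriv u a)
    {y z : ℝ} (hyz : y ≤ z) (huy : 0 < u y) (huz : u z = 0) : False := by
  have hcont : Continuous u := hC1.continuous
  have hdiff : Differentiable ℝ u := hC1.differentiable one_ne_zero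
  set S := {t : ℝ | t ∈ Set.Icc y z ∧ u t = 0} with hS
  have hSne : z ∈ S := ⟨⟨hyz, le_refl z⟩, huz⟩
  have hSbdd : BddBelow S := ⟨y, fun t ht => ht.1.1⟩
  set w := sInf S with hw
  have hwS : w ∈ S := by
    apply IsClosed.csInf_mem ?_ ⟨z, hSne⟩ hSbdd
    have : S = (Set.Icc y z) ∩ u ⁻¹' {0} := by
      ext t; simp [hS, Set.mem_preimage]
    rw [this]
    exact isClosed_Icc.inter (isClosed_singleton.preimage hcont)
  have hyw : y ≤ w := le_csInf ⟨z, hSne⟩ fun t ht => ht.1.1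
  have hwz : w ≤ z := hwS.1.2
  have hpos : ∀ t ∈ Set.Ico y w, 0 < u t := by
    intro t ht
    by_contra hle
    push_neg at hle
    have hivt := intermediate_value_Icc' ht.1 (hcont.continuousOn (s := Set.Icc y t))
    have : (0 : ℝ) ∈ Set.Icc (u t) (u y) := ⟨hle, le_of_lt huy⟩
    obtain ⟨s, hs, hus⟩ := hivt this
    have hsz : s ≤ z := le_trans hs.2 (le_trans (le_of_lt ht.2) hwz)
    have : w ≤ s := csInf_le hSbdd ⟨⟨hs.1, hsz⟩, hus⟩
    have : w ≤ t := le_trans this hs.2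
    exact absurd ht.2 (not_lt_of_ge this)
  have hnn : ∀ t ∈ Set.Icc y w, 0 ≤ u t := by
    intro t ht
    rcases eq_or_lt_of_le ht.2 with h' | h'
    · rw [h', hwS.2]
    · exact le_of_lt (hpos t ⟨ht.1, h'⟩)
  set g := fun t => u t * Real.exp (c * t) with hg
  have hderiv : ∀ t, HasDerivAt g ((deriv u t + c * u t) * Real.exp (c * t)) t := by
    intro t
    have hu : HasDerivAt u (deriv u t) t := (hdiff t).hasDerivAt
    have he : HasDerivAt (fun t => Real.exp (c * t)) (Real.exp (c * t) * (c * 1)) t :=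
      ((hasDerivAt_id t).const_mul c).exp
    have := hu.mul he
    exact this.congr_deriv (by ring)
  have hmono : MonotoneOn g (Set.Icc y w) := by
    apply monotoneOn_of_deriv_nonneg (convex_Icc y w)
    · exact (hcont.mul (Real.continuous_exp.comp (continuous_const.mul continuous_id))).continuousOn
    · intro t _
      exact (hderiv t).differentiableAt.differentiableWithinAt
    · intro t ht
      rw [interior_Icc] at ht
      rw [(hderiv t).deriv]
      have h0 : 0 ≤ u t := hnn t ⟨le_of_lt ht.1, le_of_lt ht.2⟩
      have h1 := h t
      rw [abs_of_nonneg h0] at h1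
      have h2 : 0 ≤ deriv u t + c * u t := by linarith
      exact mul_nonneg h2 (le_of_lt (Real.exp_pos _))
  have hle := hmono ⟨le_rfl, hyw⟩ ⟨hyw, le_rfl⟩ hyw
  have hgy : 0 < g y := mul_pos huy (Real.exp_pos _)
  have hgw : g w = 0 := by simp [hg, hwS.2]
  rw [hgw] at hle
  linarith

private lemma per_add (u : ℝ → ℝ) (hper : ∀ x, u (x + 1) = u x) :
    ∀ (n : ℕ) (x : ℝ), u (x + n) = u x := by
  intro n
  induction n with
  | zero => simp
  | succ k ih =>
    intro x
    have : x + ((k : ℝ) + 1) = (x + k) + 1 := by ring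
    push_cast
    rw [this, hper, ih]

theorem stmt_0 (u₀ : ℝ → ℝ) (hC1 : ContDiff ℝ 1 u₀)
    (hper : ∀ x, u₀ (x + 1) = u₀ x)
    (x₀ : ℝ) (hzero : u₀ x₀ = 0)
    (hne : ∃ x, u₀ x ≠ 0) :
    ∃ a : ℝ, deriv u₀ a < -Real.sqrt (3/2) * |u₀ a| := by
  by_contra hcon
  push_neg at hcon
  set c := Real.sqrt (3/2) with hc
  obtain ⟨y, hy⟩ := hne
  have hzeros : ∀ n : ℕ, u₀ (x₀ + n) = 0 := fun n => (per_add u₀ hper n x₀).trans hzero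
  have hzeros' : ∀ n : ℕ, u₀ (x₀ - n) = 0 := by
    intro n
    have := per_add u₀ hper n (x₀ - n)
    simpa using this.symm.trans (by rw [show x₀ - (n : ℝ) + n = x₀ by ring, hzero])
  rcases lt_or_gt_of_ne hy with hneg | hpos
  · -- u₀ y < 0 : use v x = -u₀(-x)
    set v := fun x => -u₀ (-x) with hv
    have hvC1 : ContDiff ℝ 1 v := (hC1.comp contDiff_neg).neg
    have hvd : ∀ a, deriv v a = deriv u₀ (-a) := by
      intro a
      have hu : HasDerivAt u₀ (deriv u₀ (-a)) (-a) :=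
        ((hC1.differentiable one_ne_zero) (-a)).hasDerivAt
      have h2 : HasDerivAt (fun x : ℝ => u₀ (-x)) (deriv u₀ (-a) * (-1)) a :=
        hu.comp a (hasDerivAt_neg a)
      have h3 : HasDerivAt v (-(deriv u₀ (-a) * (-1))) a := h2.neg
      rw [h3.deriv]; ring
    have h' : ∀ a, -c * |v a| ≤ deriv v a := by
      intro a
      rw [hvd a]
      have := hcon (-a)
      simpa [hv, abs_neg] using this
    set n := ⌈x₀ - y⌉₊ with hn
    have hyz : -y ≤ (n : ℝ) - x₀ := by
      have := Nat.le_ceil (x₀ - y)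
      linarith
    have hvy : 0 < v (-y) := by simp [hv]; linarith
    have hvz : v ((n : ℝ) - x₀) = 0 := by
      have : -((n : ℝ) - x₀) = x₀ - n := by ring
      simp only [hv, this, hzeros' n, neg_zero]
    exact key_aux c v hvC1 h' hyz hvy hvz
  · -- u₀ y > 0
    set n := ⌈y - x₀⌉₊ with hn
    have hyz : y ≤ x₀ + (n : ℝ) := by
      have := Nat.le_ceil (y - x₀)
      linarith
    exact key_aux c u₀ hC1 hcon hyz hpos (hzeros n)
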